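/- arXiv:0902.3423 — 3 statements merged into one kernel-verified Lean document; each statement's English description precedes it below -/
import Mathlib

section
/- There exists C < ∞ such that for all r > 0 and γ ∈ (0,1): ∫_ℝ |y − γ/2|·( e^{−(y−γ)²/(4r)} − e^{−y²/(4r)} )² dy ≤ C·(r^{1/2}·γ + γ²). -/
open MeasureTheory

lemma odd_gauss_int (b : ℝ) : ∫ z : ℝ, z * Real.exp (-b * z^2) = 0 := by
  have h := MeasureTheory.integral_neg_eq_self (fun z : ℝ => z * Real.exp (-b * z^2))
    (volume : Measure ℝ)
  simp only [neg_sq, neg_mul] at h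
  rw [integral_neg] at h
  simp only [neg_mul]
  linarith

lemma lin_gauss_eq (b c : ℝ) : (fun z : ℝ => (z + c) * Real.exp (-b * z^2))
    = fun z : ℝ => z * Real.exp (-b * z^2) + c * Real.exp (-b * z^2) := by
  funext z; ring

lemma lin_gauss_integrable (b c : ℝ) (hb : 0 < b) :
    Integrable (fun z : ℝ => (z + c) * Real.exp (-b * z^2)) := by
  rw [lin_gauss_eq]
  exact (integrable_mul_exp_neg_mul_sq hb).add ((integrable_exp_neg_mul_sq hb).const_mul c)

lemma lin_gauss_integral (b c : ℝ) (hb : 0 < b) :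
    ∫ z : ℝ, (z + c) * Real.exp (-b * z^2) = c * Real.sqrt (Real.pi / b) := by
  rw [lin_gauss_eq, integral_add (integrable_mul_exp_neg_mul_sq hb)
    ((integrable_exp_neg_mul_sq hb).const_mul c), odd_gauss_int, integral_const_mul,
    integral_gaussian]
  ring

/-- There is `C < ∞` such that for all `r > 0` and `γ ∈ (0,1)`,
`∫ |y - γ/2|·(e^{-(y-γ)²/(4r)} - e^{-y²/(4r)})² dy ≤ C·(r^{1/2}·γ + γ²)`. -/
theorem weighted_gaussian_L2_increment :
    ∃ C : ℝ, 0 < C ∧ ∀ r γ : ℝ, 0 < r → γ ∈ Set.Ioo (0:ℝ) 1 →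
      (∫ y : ℝ, |y - γ/2| * (Real.exp (-(y - γ)^2/(4*r)) - Real.exp (-y^2/(4*r)))^2)
        ≤ C * (Real.sqrt r * γ + γ^2) := by
  refine ⟨4, by norm_num, fun r γ hr hγ => ?_⟩
  obtain ⟨hγ0, hγ1⟩ := hγ
  set b : ℝ := 1 / (4 * r) with hbdef
  have hb : 0 < b := by positivity
  have hrw : ∀ x : ℝ, -x^2/(4*r) = -b * x^2 := by
    intro x; rw [hbdef]; field_simp
  -- the comparison function and its integrability
  have hint1 : Integrable (fun y : ℝ => (y - γ/2) * Real.exp (-b * (y - γ)^2)) := by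
    have := (lin_gauss_integrable b (γ/2) hb).comp_sub_right γ
    refine this.congr (Filter.Eventually.of_forall fun y => ?_)
    simp only; ring_nf
  have hint2 : Integrable (fun y : ℝ => (y - γ/2) * Real.exp (-b * y^2)) := by
    have := lin_gauss_integrable b (-(γ/2)) hb
    refine this.congr (Filter.Eventually.of_forall fun y => ?_)
    simp only; ring_nf
  have hint : Integrable (fun y : ℝ =>
      (y - γ/2) * (Real.exp (-b * (y - γ)^2) - Real.exp (-b * y^2))) := by
    have := hint1.sub hint2
    refine this.congr (Filter.Eventually.of_forall fun y => ?_)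
    simp only [Pi.sub_apply]; ring
  -- pointwise bound
  have hpt : ∀ y : ℝ, |y - γ/2| * (Real.exp (-(y - γ)^2/(4*r)) - Real.exp (-y^2/(4*r)))^2
      ≤ (y - γ/2) * (Real.exp (-b * (y - γ)^2) - Real.exp (-b * y^2)) := by
    intro y
    rw [hrw, hrw]
    set A := Real.exp (-b * (y - γ)^2) with hA
    set B := Real.exp (-b * y^2) with hB
    have hA1 : A ≤ 1 := Real.exp_le_one_iff.mpr (by nlinarith [sq_nonneg (y - γ)])
    have hB1 : B ≤ 1 := Real.exp_le_one_iff.mpr (by nlinarith [sq_nonneg y])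
    have hA0 : 0 < A := Real.exp_pos _
    have hB0 : 0 < B := Real.exp_pos _
    have habs : |A - B| ≤ 1 := abs_sub_le_iff.mpr ⟨by linarith, by linarith⟩
    have hsign : 0 ≤ (y - γ/2) * (A - B) := by
      rcases le_or_gt (γ/2) y with h | h
      · have hAB : B ≤ A := by
          rw [hA, hB]
          apply Real.exp_le_exp.mpr
          have h2 : (y - γ)^2 ≤ y^2 := by nlinarith
          nlinarith [mul_le_mul_of_nonneg_left h2 hb.le]
        exact mul_nonneg (by linarith) (by linarith)
      · have hAB : A ≤ B := by
          rw [hA, hB]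
          apply Real.exp_le_exp.mpr
          have h2 : y^2 ≤ (y - γ)^2 := by nlinarith
          nlinarith [mul_le_mul_of_nonneg_left h2 hb.le]
        nlinarith [mul_nonneg (show (0:ℝ) ≤ γ/2 - y by linarith)
          (show (0:ℝ) ≤ B - A by linarith)]
    calc |y - γ/2| * (A - B)^2 = |y - γ/2| * |A - B| * |A - B| := by
          rw [mul_assoc, abs_mul_abs_self]; ring
      _ ≤ |y - γ/2| * |A - B| * 1 :=
          mul_le_mul_of_nonneg_left habs (by positivity)
      _ = |(y - γ/2) * (A - B)| := by rw [mul_one, abs_mul]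
      _ = (y - γ/2) * (A - B) := abs_of_nonneg hsign
  -- compare integrals
  have hmono : (∫ y : ℝ, |y - γ/2| * (Real.exp (-(y - γ)^2/(4*r)) - Real.exp (-y^2/(4*r)))^2)
      ≤ ∫ y : ℝ, (y - γ/2) * (Real.exp (-b * (y - γ)^2) - Real.exp (-b * y^2)) := by
    apply integral_mono_of_nonneg (Filter.Eventually.of_forall fun y => by positivity) hint
      (Filter.Eventually.of_forall hpt)
  -- compute the right-hand integral
  have hval : (∫ y : ℝ, (y - γ/2) * (Real.exp (-b * (y - γ)^2) - Real.exp (-b * y^2)))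
      = γ * Real.sqrt (Real.pi / b) := by
    have hsplit : (∫ y : ℝ, (y - γ/2) * (Real.exp (-b * (y - γ)^2) - Real.exp (-b * y^2)))
        = (∫ y : ℝ, (y - γ/2) * Real.exp (-b * (y - γ)^2))
          - ∫ y : ℝ, (y - γ/2) * Real.exp (-b * y^2) := by
      rw [← integral_sub hint1 hint2]
      congr 1; funext y; ring
    have h1 : (∫ y : ℝ, (y - γ/2) * Real.exp (-b * (y - γ)^2))
        = (γ/2) * Real.sqrt (Real.pi / b) := by
      have := MeasureTheory.integral_sub_right_eq_self
        (fun z : ℝ => (z + γ/2) * Real.exp (-b * z^2)) (μ := volume) γ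
      rw [← lin_gauss_integral b (γ/2) hb, ← this]
      congr 1; funext y; ring_nf
    have h2 : (∫ y : ℝ, (y - γ/2) * Real.exp (-b * y^2))
        = (-(γ/2)) * Real.sqrt (Real.pi / b) := by
      rw [← lin_gauss_integral b (-(γ/2)) hb]
      congr 1
    rw [hsplit, h1, h2]; ring
  have hsq : Real.sqrt (Real.pi / b) ≤ 4 * Real.sqrt r := by
    have hπ : Real.pi / b ≤ 16 * r := by
      have hb' : Real.pi / b = Real.pi * (4 * r) := by
        rw [hbdef]; field_simp
      rw [hb']
      nlinarith [Real.pi_le_four]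
    have h16 : Real.sqrt (16 * r) = 4 * Real.sqrt r := by
      rw [Real.sqrt_mul (by norm_num : (0:ℝ) ≤ 16) r,
        show (16:ℝ) = 4^2 by norm_num, Real.sqrt_sq (by norm_num : (0:ℝ) ≤ 4)]
    calc Real.sqrt (Real.pi / b) ≤ Real.sqrt (16 * r) := Real.sqrt_le_sqrt hπ
      _ = 4 * Real.sqrt r := h16
  rw [hval] at hmono
  have hfin : γ * Real.sqrt (Real.pi / b) ≤ 4 * (Real.sqrt r * γ + γ^2) := by
    have h1 : γ * Real.sqrt (Real.pi / b) ≤ γ * (4 * Real.sqrt r) :=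
      mul_le_mul_of_nonneg_left hsq hγ0.le
    nlinarith [sq_nonneg γ]
  linarith
end

section
/- Fix v, λ with 1 ≤ λ ≤ 2 and vλ − λ²/2 ≥ 2a for some a ≥ 0, and let L ≥ 0. Define, for t ∈ [0,1], (G²⋆h)(t,x) = ∫∫₀^t G(t−s, x−y)²·h(y − v s + L) ds dy where h(x) = (1+|x|)e^{(1−δ/2)|x|} for x ≤ 0, and G is the heat kernel of ∂²_x. Then there exists C < ∞ (depending on v, λ, δ) with ∫∫₀^t e^{t−s}·G(t−s, x−y)·√(h(y − vs + L)) ds dy ≤ C·√(h(x − v t + L)) for all 0 ≤ t ≤ 1 and x ≤ vt + L. -/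
open Real MeasureTheory

lemma gauss_lin_integrable (b c : ℝ) (hb : 0 < b) :
    Integrable (fun u : ℝ => Real.exp (-b*u^2 + c*u)) := by
  have key : ∀ u : ℝ, -b*u^2 + c*u = -b*(u - c/(2*b))^2 + c^2/(4*b) := by
    intro u; field_simp; ring
  have : (fun u : ℝ => Real.exp (-b*u^2 + c*u))
      = fun u : ℝ => Real.exp (c^2/(4*b)) * Real.exp (-b*(u - c/(2*b))^2) := by
    funext u; rw [key u, Real.exp_add]; ring
  rw [this]
  exact ((integrable_exp_neg_mul_sq hb).comp_sub_right (c/(2*b))).const_mul _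

lemma gauss_lin_integral (b c : ℝ) (hb : 0 < b) :
    (∫ u : ℝ, Real.exp (-b*u^2 + c*u)) = Real.sqrt (π/b) * Real.exp (c^2/(4*b)) := by
  have key : ∀ u : ℝ, -b*u^2 + c*u = -b*(u - c/(2*b))^2 + c^2/(4*b) := by
    intro u; field_simp; ring
  calc (∫ u : ℝ, Real.exp (-b*u^2 + c*u))
      = ∫ u : ℝ, Real.exp (c^2/(4*b)) * Real.exp (-b*(u - c/(2*b))^2) := by
        congr 1; funext u; rw [key u, Real.exp_add]; ring
    _ = Real.exp (c^2/(4*b)) * ∫ u : ℝ, Real.exp (-b*(u - c/(2*b))^2) := by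
        rw [integral_const_mul]
    _ = Real.exp (c^2/(4*b)) * ∫ u : ℝ, Real.exp (-b*u^2) := by
        rw [integral_sub_right_eq_self (fun u : ℝ => Real.exp (-b*u^2)) (c/(2*b))]
    _ = Real.sqrt (π/b) * Real.exp (c^2/(4*b)) := by rw [integral_gaussian]; ring

set_option maxHeartbeats 1000000 in
/-- Convolution stability estimate: with `h x = (1+|x|)e^{(1-δ/2)|x|}`,
`1 ≤ λ ≤ 2`, `vλ - λ²/2 ≥ 2a`, `a ≥ 0`, `L ≥ 0`, there is `C` such that for `t ∈ [0,1]`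
and `x ≤ vt + L`,
`∫∫₀^t e^{t-s}·G(t-s, x-y)·√(h(y - vs + L)) ds dy ≤ C·√(h(x - vt + L))`. -/
theorem convolution_stability (v lam a L δ : ℝ)
    (hlam1 : 1 ≤ lam) (hlam2 : lam ≤ 2) (ha : 0 ≤ a)
    (hva : 2*a ≤ v*lam - lam^2/2) (hL : 0 ≤ L) (hδ : δ ∈ Set.Ioo (0:ℝ) 1)
    (h : ℝ → ℝ) (hh : ∀ x, h x = (1 + |x|) * Real.exp ((1 - δ/2) * |x|)) :
    ∃ C : ℝ, 0 < C ∧ ∀ t x : ℝ, 0 ≤ t → t ≤ 1 → x ≤ v*t + L →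
      (∫ s in Set.Ioc (0:ℝ) t, ∫ y : ℝ,
        Real.exp (t - s) * ((4*π*(t - s)) ^ (-(1/2) : ℝ) * Real.exp (-(x - y)^2/(4*(t - s))))
          * Real.sqrt (h (y - v*s + L)))
      ≤ C * Real.sqrt (h (x - v*t + L)) := by
  obtain ⟨hδ0, hδ1⟩ := hδ
  have hβ0 : 0 ≤ 1 - δ/2 := by linarith
  have hβ1 : 1 - δ/2 ≤ 1 := by linarith
  have hpos : ∀ w, 0 ≤ h w := by
    intro w; rw [hh]; positivity
  -- submultiplicativity of √h
  have hsub : ∀ w u : ℝ, Real.sqrt (h (w + u)) ≤ Real.sqrt (h w) * Real.exp |u| := by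
    intro w u
    have h1 : h (w + u) ≤ h w * Real.exp (2*|u|) := by
      rw [hh, hh]
      have habs : |w + u| ≤ |w| + |u| := abs_add_le w u
      have hwn := abs_nonneg w
      have hun := abs_nonneg u
      calc (1 + |w + u|) * Real.exp ((1 - δ/2) * |w + u|)
          ≤ (1 + (|w| + |u|)) * Real.exp ((1 - δ/2) * (|w| + |u|)) := by
            refine mul_le_mul (by linarith) (Real.exp_le_exp.mpr ?_) (Real.exp_nonneg _)
              (by linarith)
            nlinarith
        _ ≤ ((1 + |w|) * Real.exp |u|) * (Real.exp ((1 - δ/2) * |w|) * Real.exp |u|) := by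
            refine mul_le_mul ?_ ?_ (Real.exp_nonneg _) (by positivity)
            · nlinarith [Real.add_one_le_exp |u|]
            · rw [← Real.exp_add]
              apply Real.exp_le_exp.mpr
              nlinarith
        _ = (1 + |w|) * Real.exp ((1 - δ/2) * |w|) * Real.exp (2*|u|) := by
            rw [two_mul, Real.exp_add]; ring
    have h2 : Real.sqrt (h (w + u)) ≤ Real.sqrt (h w * Real.exp (2*|u|)) :=
      Real.sqrt_le_sqrt h1
    rwa [Real.sqrt_mul (hpos w), show Real.exp (2*|u|) = (Real.exp |u|)^2 by
        rw [sq, ← Real.exp_add]; ring_nf,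
      Real.sqrt_sq (Real.exp_nonneg _)] at h2
  refine ⟨2 * Real.exp 2 * Real.exp |v|, by positivity, ?_⟩
  intro t x ht0 ht1 hxt
  set z : ℝ := x - v*t + L with hz
  set B : ℝ := 2 * Real.exp 2 * Real.exp |v| * Real.sqrt (h z) with hB
  have hBnn : 0 ≤ B := by positivity
  -- per-s bound
  have key : ∀ s ∈ Set.Ioc (0:ℝ) t,
      ‖∫ y : ℝ, Real.exp (t - s) * ((4*π*(t - s)) ^ (-(1/2) : ℝ)
          * Real.exp (-(x - y)^2/(4*(t - s)))) * Real.sqrt (h (y - v*s + L))‖ ≤ B := by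
    intro s hs
    obtain ⟨hs0, hst⟩ := hs
    rcases eq_or_lt_of_le hst with hseq | hslt
    · -- s = t : integrand vanishes
      have hts : t - s = 0 := by rw [hseq, sub_self]
      have hzero : ∀ y : ℝ, Real.exp (t - s) * ((4*π*(t - s)) ^ (-(1/2) : ℝ)
          * Real.exp (-(x - y)^2/(4*(t - s)))) * Real.sqrt (h (y - v*s + L)) = 0 := by
        intro y
        rw [hts, mul_zero, Real.zero_rpow (by norm_num : (-(1/2):ℝ) ≠ 0)]
        ring
      simp only [hzero, integral_zero, norm_zero]
      exact hBnn
    · set τ : ℝ := t - s with hτdef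
      have hτ : 0 < τ := by rw [hτdef]; linarith
      have hτ1 : τ ≤ 1 := by rw [hτdef]; linarith
      set b : ℝ := 1/(4*τ) with hbdef
      have hb : 0 < b := by positivity
      set zs : ℝ := x - v*s + L with hzs
      set A : ℝ := Real.exp τ * ((4*π*τ) ^ (-(1/2) : ℝ)) * Real.sqrt (h zs) with hA
      set g : ℝ → ℝ := fun y =>
        A * (Real.exp (-b*(y-x)^2 + 1*(y-x)) + Real.exp (-b*(y-x)^2 + (-1)*(y-x))) with hg
      have hgint : Integrable g := by
        apply Integrable.const_mul
        exact ((gauss_lin_integrable b 1 hb).comp_sub_right x).add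
          ((gauss_lin_integrable b (-1) hb).comp_sub_right x)
      have hrpow_nn : (0:ℝ) ≤ (4*π*τ) ^ (-(1/2) : ℝ) := Real.rpow_nonneg (by positivity) _
      have hfnn : ∀ y : ℝ, 0 ≤ Real.exp τ * ((4*π*τ) ^ (-(1/2) : ℝ)
          * Real.exp (-(x - y)^2/(4*τ))) * Real.sqrt (h (y - v*s + L)) := by
        intro y; positivity
      have e1 : ∀ y : ℝ, -(x - y)^2/(4*τ) = -b*(y-x)^2 := by
        intro y; rw [hbdef]; field_simp; ring
      have hfg : ∀ y : ℝ, Real.exp τ * ((4*π*τ) ^ (-(1/2) : ℝ)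
          * Real.exp (-(x - y)^2/(4*τ))) * Real.sqrt (h (y - v*s + L)) ≤ g y := by
        intro y
        have e2 : y - v*s + L = zs + (y - x) := by rw [hzs]; ring
        have e3 : Real.sqrt (h (y - v*s + L))
            ≤ Real.sqrt (h zs) * (Real.exp (y-x) + Real.exp (-(y-x))) := by
          rw [e2]
          refine le_trans (hsub zs (y-x)) ?_
          have hexp : Real.exp |y-x| ≤ Real.exp (y-x) + Real.exp (-(y-x)) := by
            rcases abs_choice (y-x) with hc | hc <;> rw [hc] <;>
              [linarith [Real.exp_pos (-(y-x))]; linarith [Real.exp_pos (y-x)]]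
          exact mul_le_mul_of_nonneg_left hexp (Real.sqrt_nonneg _)
        calc Real.exp τ * ((4*π*τ) ^ (-(1/2) : ℝ)
              * Real.exp (-(x - y)^2/(4*τ))) * Real.sqrt (h (y - v*s + L))
            ≤ Real.exp τ * ((4*π*τ) ^ (-(1/2) : ℝ)
              * Real.exp (-(x - y)^2/(4*τ)))
              * (Real.sqrt (h zs) * (Real.exp (y-x) + Real.exp (-(y-x)))) := by
              refine mul_le_mul_of_nonneg_left e3 ?_
              positivity
          _ = g y := by
              rw [hg, hA, e1 y]
              simp only [Real.exp_add, one_mul, neg_one_mul]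
              ring
      have hmono : (∫ y : ℝ, Real.exp τ * ((4*π*τ) ^ (-(1/2) : ℝ)
          * Real.exp (-(x - y)^2/(4*τ))) * Real.sqrt (h (y - v*s + L))) ≤ ∫ y, g y :=
        integral_mono_of_nonneg (Filter.Eventually.of_forall hfnn) hgint
          (Filter.Eventually.of_forall hfg)
      have hgval : (∫ y, g y) = A * (2 * Real.sqrt (4*π*τ) * Real.exp τ) := by
        rw [hg, integral_const_mul]
        have i1 : (∫ y : ℝ, (Real.exp (-b*(y-x)^2 + 1*(y-x)) + Real.exp (-b*(y-x)^2 + (-1)*(y-x))))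
            = (∫ u : ℝ, Real.exp (-b*u^2 + 1*u)) + ∫ u : ℝ, Real.exp (-b*u^2 + (-1)*u) := by
          rw [integral_add (((gauss_lin_integrable b 1 hb).comp_sub_right x))
            (((gauss_lin_integrable b (-1) hb).comp_sub_right x))]
          congr 1
          · exact integral_sub_right_eq_self (fun u : ℝ => Real.exp (-b*u^2 + 1*u)) x
          · exact integral_sub_right_eq_self (fun u : ℝ => Real.exp (-b*u^2 + (-1)*u)) x
        rw [i1, gauss_lin_integral b 1 hb, gauss_lin_integral b (-1) hb]
        have e4 : π/b = 4*π*τ := by rw [hbdef]; field_simp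
        have e5 : (1:ℝ)^2/(4*b) = τ := by rw [hbdef]; field_simp
        have e6 : ((-1):ℝ)^2/(4*b) = τ := by rw [hbdef]; field_simp
        rw [e4, e5, e6]; ring
      have hcancel : (4*π*τ) ^ (-(1/2) : ℝ) * Real.sqrt (4*π*τ) = 1 := by
        have h4 : (0:ℝ) < 4*π*τ := by positivity
        rw [Real.rpow_neg h4.le, ← Real.sqrt_eq_rpow]
        exact inv_mul_cancel₀ (ne_of_gt (Real.sqrt_pos.mpr h4))
      have hzs_le : Real.sqrt (h zs) ≤ Real.exp |v| * Real.sqrt (h z) := by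
        have e7 : zs = z + v*τ := by rw [hzs, hz, hτdef]; ring
        rw [e7]
        refine le_trans (hsub z (v*τ)) ?_
        rw [mul_comm (Real.sqrt (h z))]
        refine mul_le_mul_of_nonneg_right ?_ (Real.sqrt_nonneg _)
        apply Real.exp_le_exp.mpr
        rw [abs_mul, abs_of_pos hτ]
        nlinarith [abs_nonneg v]
      have hfin : A * (2 * Real.sqrt (4*π*τ) * Real.exp τ) ≤ B := by
        rw [hA, hB]
        have hre : Real.exp τ * ((4*π*τ) ^ (-(1/2) : ℝ)) * Real.sqrt (h zs)
            * (2 * Real.sqrt (4*π*τ) * Real.exp τ)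
            = 2 * (Real.exp τ * Real.exp τ) * ((4*π*τ) ^ (-(1/2) : ℝ) * Real.sqrt (4*π*τ))
              * Real.sqrt (h zs) := by ring
        rw [hre, hcancel, mul_one, ← Real.exp_add]
        calc 2 * Real.exp (τ + τ) * Real.sqrt (h zs)
            ≤ 2 * Real.exp 2 * (Real.exp |v| * Real.sqrt (h z)) := by
              refine mul_le_mul ?_ hzs_le (Real.sqrt_nonneg _) (by positivity)
              have : Real.exp (τ + τ) ≤ Real.exp 2 := Real.exp_le_exp.mpr (by linarith)
              linarith
          _ = 2 * Real.exp 2 * Real.exp |v| * Real.sqrt (h z) := by ring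
      have hFnn : 0 ≤ ∫ y : ℝ, Real.exp τ * ((4*π*τ) ^ (-(1/2) : ℝ)
          * Real.exp (-(x - y)^2/(4*τ))) * Real.sqrt (h (y - v*s + L)) :=
        integral_nonneg hfnn
      rw [Real.norm_eq_abs, abs_of_nonneg hFnn]
      rw [hgval] at hmono
      exact le_trans hmono hfin
  -- conclude
  have hvol : volume (Set.Ioc (0:ℝ) t) < ⊤ := measure_Ioc_lt_top
  have hnorm := norm_setIntegral_le_of_norm_le_const hvol key
  rw [Real.norm_eq_abs, measureReal_def] at hnorm
  have hvolval : (volume (Set.Ioc (0:ℝ) t)).toReal = t := by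
    rw [Real.volume_Ioc, ENNReal.toReal_ofReal (by linarith)]; ring
  rw [hvolval] at hnorm
  have h2 := le_trans (le_abs_self _) hnorm
  nlinarith [h2, hBnn, ht1]
end

section
/- Let δ ∈ (0,1/2), ε ∈ (0,1), v > 0, L > 0, and define x_lin(t) = ε²·δ̂^{−1/2}·e^{(1−δ/2)t}·sin(δ̂^{1/2}t) with δ̂ = δ − δ²/4, and suppose |log ε| is large enough that exp(|log ε|^{−3}) ≤ 2. Then for all x, ∫₀¹ ∫_{y ≤ vs} (e^{−(y−x)²/(2(1−s))}/(4π(1−s))) · min{ ε²δ^{−1/2}·e^{vs − y + L}, α/2 } ds dy ≤ min{ 4ε²δ^{−1/2}·e^{−(x−L−v)}, α } for any α ∈ (0,1]. -/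
open Real MeasureTheory

lemma gauss_int (t c : ℝ) (ht : 0 < t) :
    (∫ y : ℝ, Real.exp (-(2*t)⁻¹ * (y - c)^2)) = Real.sqrt (2*π*t) := by
  rw [integral_sub_right_eq_self (μ := volume) (fun y : ℝ => Real.exp (-(2*t)⁻¹ * y^2)) c]
  rw [integral_gaussian]
  congr 1
  field_simp

lemma gauss_le (t c B D : ℝ) (ht : 0 < t) (hD : 0 ≤ D) (f : ℝ → ℝ)
    (hf0 : ∀ y, 0 ≤ f y)
    (hfle : ∀ y, f y ≤ D / (4*π*t) * Real.exp (-(y - c)^2/(2*t))) :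
    ∫ y in Set.Iic B, f y ≤ D * (Real.sqrt (2*π) / (4*π)) * t ^ (-(1/2):ℝ) := by
  have hπ := Real.pi_pos
  have harg : ∀ y : ℝ, -(y - c)^2/(2*t) = -(2*t)⁻¹ * (y - c)^2 := fun y => by
    field_simp
  have hint : Integrable (fun y : ℝ => D / (4*π*t) * Real.exp (-(2*t)⁻¹ * (y - c)^2)) :=
    ((integrable_exp_neg_mul_sq (by positivity)).comp_sub_right c).const_mul _
  have step1 : ∫ y in Set.Iic B, f y
      ≤ ∫ y in Set.Iic B, D / (4*π*t) * Real.exp (-(2*t)⁻¹ * (y - c)^2) := by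
    refine integral_mono_of_nonneg (ae_of_all _ hf0) hint.restrict (ae_of_all _ fun y => ?_)
    show f y ≤ D / (4*π*t) * Real.exp (-(2*t)⁻¹ * (y - c)^2)
    rw [← harg y]; exact hfle y
  have step2 : ∫ y in Set.Iic B, D / (4*π*t) * Real.exp (-(2*t)⁻¹ * (y - c)^2)
      ≤ ∫ y : ℝ, D / (4*π*t) * Real.exp (-(2*t)⁻¹ * (y - c)^2) :=
    setIntegral_le_integral hint (ae_of_all _ fun y => by positivity)
  have step3 : (∫ y : ℝ, D / (4*π*t) * Real.exp (-(2*t)⁻¹ * (y - c)^2))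
      = D / (4*π*t) * Real.sqrt (2*π*t) := by
    rw [integral_const_mul, gauss_int t c ht]
  have step4 : D / (4*π*t) * Real.sqrt (2*π*t)
      = D * (Real.sqrt (2*π) / (4*π)) * t ^ (-(1/2):ℝ) := by
    rw [Real.sqrt_mul (by positivity : (0:ℝ) ≤ 2*π), Real.rpow_neg ht.le,
      ← Real.sqrt_eq_rpow]
    have h1 : Real.sqrt t ≠ 0 := by positivity
    have h2 : Real.sqrt t * Real.sqrt t = t := Real.mul_self_sqrt ht.le
    field_simp
    linear_combination D * h2
  calc ∫ y in Set.Iic B, f y ≤ _ := step1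
    _ ≤ _ := step2
    _ = _ := step3
    _ = _ := step4

lemma rpow_integrable : IntegrableOn (fun s : ℝ => (1-s) ^ (-(1/2):ℝ)) (Set.Ioc (0:ℝ) 1) := by
  have h : IntervalIntegrable (fun u : ℝ => u ^ (-(1/2):ℝ)) volume 0 1 :=
    intervalIntegral.intervalIntegrable_rpow' (by norm_num)
  have h2 := h.comp_sub_left 1
  norm_num at h2
  exact (intervalIntegrable_iff_integrableOn_Ioc_of_le (by norm_num)).mp h2.symm

lemma rpow_int : ∫ s in Set.Ioc (0:ℝ) 1, (1-s) ^ (-(1/2):ℝ) = 2 := by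
  rw [← intervalIntegral.integral_of_le (by norm_num : (0:ℝ) ≤ 1)]
  rw [intervalIntegral.integral_comp_sub_left (fun u : ℝ => u ^ (-(1/2):ℝ)) 1]
  norm_num
  open intervalIntegral in rw [integral_rpow (Or.inl (by norm_num))]
  norm_num

lemma outer_le (F : ℝ → ℝ) (M : ℝ)
    (h : ∀ s ∈ Set.Ioc (0:ℝ) 1, F s ≤ M * (1-s) ^ (-(1/2):ℝ))
    (h0 : ∀ s ∈ Set.Ioc (0:ℝ) 1, 0 ≤ F s) :
    ∫ s in Set.Ioc (0:ℝ) 1, F s ≤ 2 * M := by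
  have hint : IntegrableOn (fun s : ℝ => M * (1-s) ^ (-(1/2):ℝ)) (Set.Ioc (0:ℝ) 1) :=
    rpow_integrable.const_mul M
  have hmono := integral_mono_of_nonneg
    ((ae_restrict_iff' measurableSet_Ioc).mpr (ae_of_all _ h0)) hint
    ((ae_restrict_iff' measurableSet_Ioc).mpr (ae_of_all _ h))
  rw [integral_const_mul, rpow_int] at hmono
  linarith

/-- Green's-function bound `(G² ⋆ q̄)(1,x) ≤ min{4ε²δ^{-1/2}e^{-(x-L-v)}, α}`
from the lower-bound construction, where `q̄(s,y) = min{ε²δ^{-1/2}e^{vs-y+L}, α/2}`. -/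
theorem greens_function_bound (δ ε v L α : ℝ)
    (hδ : δ ∈ Set.Ioo (0:ℝ) (1/2)) (hε : ε ∈ Set.Ioo (0:ℝ) 1)
    (hv : 0 < v) (hL : 0 < L)
    (hlog : Real.exp (|Real.log ε| ^ (-(3:ℝ))) ≤ 2)
    (hα : α ∈ Set.Ioc (0:ℝ) 1) :
    ∀ x : ℝ,
      (∫ s in Set.Ioc (0:ℝ) 1, ∫ y in Set.Iic (v*s),
        Real.exp (-(y - x)^2/(2*(1 - s))) / (4*π*(1 - s)) *
          min (ε^2 * δ ^ (-(1/2) : ℝ) * Real.exp (v*s - y + L)) (α/2))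
      ≤ min (4 * ε^2 * δ ^ (-(1/2) : ℝ) * Real.exp (-(x - L - v))) α := by
  obtain ⟨hδ0, hδ1⟩ := hδ
  obtain ⟨hε0, hε1⟩ := hε
  obtain ⟨hα0, hα1⟩ := hα
  intro x
  have hπ := Real.pi_pos
  set C := ε^2 * δ ^ (-(1/2):ℝ) with hCdef
  have hC : 0 < C := mul_pos (pow_pos hε0 2) (Real.rpow_pos_of_pos hδ0 _)
  have hker : ∀ s ∈ Set.Ioc (0:ℝ) 1, ∀ y : ℝ,
      0 ≤ Real.exp (-(y - x)^2/(2*(1 - s))) / (4*π*(1 - s)) := by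
    intro s hs y
    apply div_nonneg (Real.exp_nonneg _)
    have h1s : (0:ℝ) ≤ 1 - s := by linarith [hs.2]
    positivity
  have hmin : ∀ s y : ℝ, 0 ≤ min (C * Real.exp (v*s - y + L)) (α/2) :=
    fun s y => le_min (mul_nonneg hC.le (Real.exp_nonneg _)) (by linarith)
  have h0 : ∀ s ∈ Set.Ioc (0:ℝ) 1, 0 ≤ ∫ y in Set.Iic (v*s),
      Real.exp (-(y - x)^2/(2*(1 - s))) / (4*π*(1 - s)) *
        min (C * Real.exp (v*s - y + L)) (α/2) := by
    intro s hs
    exact setIntegral_nonneg measurableSet_Iic fun y _ =>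
      mul_nonneg (hker s hs y) (hmin s y)
  have hsq : Real.sqrt (2*π) ≤ 2*π := by
    nlinarith [Real.sq_sqrt (show (0:ℝ) ≤ 2*π by positivity), Real.sqrt_nonneg (2*π),
      Real.pi_gt_three]
  have hsq0 : (0:ℝ) ≤ Real.sqrt (2*π) := Real.sqrt_nonneg _
  refine le_min ?_ ?_
  · -- first bound
    have key1 : ∀ s ∈ Set.Ioc (0:ℝ) 1,
        (∫ y in Set.Iic (v*s), Real.exp (-(y - x)^2/(2*(1 - s))) / (4*π*(1 - s)) *
          min (C * Real.exp (v*s - y + L)) (α/2))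
        ≤ (C * Real.exp (L + v - x + 1/2)) * (Real.sqrt (2*π)/(4*π)) * (1-s) ^ (-(1/2):ℝ) := by
      intro s hs
      rcases eq_or_lt_of_le hs.2 with h1 | h1
      · subst h1
        have hz : (fun y : ℝ => Real.exp (-(y - x)^2/(2*(1 - 1))) / (4*π*(1 - 1)) *
            min (C * Real.exp (v*1 - y + L)) (α/2)) = fun _ : ℝ => (0:ℝ) := by
          funext y; norm_num
        rw [hz, integral_zero]
        rw [show (1:ℝ) - 1 = 0 by norm_num, Real.zero_rpow (by norm_num)]
        exact (mul_zero _).ge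
      · have ht : 0 < 1 - s := by linarith
        apply gauss_le (1-s) (x - (1-s)) (v*s) (C * Real.exp (L + v - x + 1/2)) ht
          (mul_nonneg hC.le (Real.exp_nonneg _))
        · intro y; exact mul_nonneg (hker s hs y) (hmin s y)
        · intro y
          have hker' := hker s hs y
          have hvs : v * s ≤ v := by nlinarith [hs.2, hv.le]
          have hid : -(y - x)^2/(2*(1-s)) + (v*s - y + L)
              ≤ (L + v - x + 1/2) + -(y - (x - (1-s)))^2/(2*(1-s)) := by
            have hkey : -(y - x)^2/(2*(1-s)) - y
                = -(y - (x - (1-s)))^2/(2*(1-s)) - x + (1-s)/2 := by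
              field_simp; ring
            have hs0 := hs.1
            linarith
          calc Real.exp (-(y - x)^2/(2*(1 - s))) / (4*π*(1 - s)) *
                min (C * Real.exp (v*s - y + L)) (α/2)
              ≤ Real.exp (-(y - x)^2/(2*(1 - s))) / (4*π*(1 - s)) *
                (C * Real.exp (v*s - y + L)) :=
                mul_le_mul_of_nonneg_left (min_le_left _ _) hker'
            _ = C / (4*π*(1-s)) * Real.exp (-(y - x)^2/(2*(1 - s)) + (v*s - y + L)) := by
                rw [Real.exp_add (-(y - x)^2/(2*(1 - s))) (v*s - y + L)]; ring
            _ ≤ C / (4*π*(1-s)) *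
                Real.exp ((L + v - x + 1/2) + -(y - (x - (1-s)))^2/(2*(1-s))) := by
                exact mul_le_mul_of_nonneg_left (Real.exp_le_exp.mpr hid)
                  (div_nonneg hC.le (by positivity))
            _ = (C * Real.exp (L + v - x + 1/2)) / (4*π*(1-s)) *
                Real.exp (-(y - (x - (1-s)))^2/(2*(1-s))) := by
                rw [Real.exp_add (L + v - x + 1/2) (-(y - (x - (1-s)))^2/(2*(1-s)))]; ring
    have step := outer_le _ _ key1 h0
    have he3 : Real.exp (1/2:ℝ) ≤ 3 := by
      have h2 : Real.exp (1/2:ℝ) ≤ Real.exp 1 := Real.exp_le_exp.mpr (by norm_num)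
      linarith [Real.exp_one_lt_d9]
    have hscal : 2 * (Real.exp (1/2:ℝ) * (Real.sqrt (2*π)/(4*π))) ≤ 4 := by
      have hmul : Real.exp (1/2:ℝ) * Real.sqrt (2*π) ≤ 8*π := by
        nlinarith [Real.exp_nonneg (1/2:ℝ)]
      calc 2 * (Real.exp (1/2:ℝ) * (Real.sqrt (2*π)/(4*π)))
          = (Real.exp (1/2:ℝ) * Real.sqrt (2*π)) / (2*π) := by ring
        _ ≤ (8*π) / (2*π) :=
            (div_le_div_iff_of_pos_right (show (0:ℝ) < 2*π by positivity)).mpr hmul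
        _ = 4 := by field_simp; ring
    calc (∫ s in Set.Ioc (0:ℝ) 1, ∫ y in Set.Iic (v*s),
          Real.exp (-(y - x)^2/(2*(1 - s))) / (4*π*(1 - s)) *
            min (C * Real.exp (v*s - y + L)) (α/2))
        ≤ 2 * ((C * Real.exp (L + v - x + 1/2)) * (Real.sqrt (2*π)/(4*π))) := step
      _ = (C * Real.exp (L + v - x)) * (2 * (Real.exp (1/2:ℝ) * (Real.sqrt (2*π)/(4*π)))) := by
          rw [show L + v - x + 1/2 = (L + v - x) + 1/2 by ring,
            Real.exp_add (L + v - x) (1/2)]; ring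
      _ ≤ (C * Real.exp (L + v - x)) * 4 :=
          mul_le_mul_of_nonneg_left hscal (mul_nonneg hC.le (Real.exp_nonneg _))
      _ = 4 * ε^2 * δ ^ (-(1/2):ℝ) * Real.exp (-(x - L - v)) := by
          rw [show -(x - L - v) = L + v - x by ring, hCdef]; ring
  · -- second bound
    have key2 : ∀ s ∈ Set.Ioc (0:ℝ) 1,
        (∫ y in Set.Iic (v*s), Real.exp (-(y - x)^2/(2*(1 - s))) / (4*π*(1 - s)) *
          min (C * Real.exp (v*s - y + L)) (α/2))
        ≤ (α/2) * (Real.sqrt (2*π)/(4*π)) * (1-s) ^ (-(1/2):ℝ) := by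
      intro s hs
      rcases eq_or_lt_of_le hs.2 with h1 | h1
      · subst h1
        have hz : (fun y : ℝ => Real.exp (-(y - x)^2/(2*(1 - 1))) / (4*π*(1 - 1)) *
            min (C * Real.exp (v*1 - y + L)) (α/2)) = fun _ : ℝ => (0:ℝ) := by
          funext y; norm_num
        rw [hz, integral_zero]
        rw [show (1:ℝ) - 1 = 0 by norm_num, Real.zero_rpow (by norm_num)]
        exact (mul_zero _).ge
      · have ht : 0 < 1 - s := by linarith
        apply gauss_le (1-s) x (v*s) (α/2) ht (by linarith)
        · intro y; exact mul_nonneg (hker s hs y) (hmin s y)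
        · intro y
          calc Real.exp (-(y - x)^2/(2*(1 - s))) / (4*π*(1 - s)) *
                min (C * Real.exp (v*s - y + L)) (α/2)
              ≤ Real.exp (-(y - x)^2/(2*(1 - s))) / (4*π*(1 - s)) * (α/2) :=
                mul_le_mul_of_nonneg_left (min_le_right _ _) (hker s hs y)
            _ = (α/2) / (4*π*(1-s)) * Real.exp (-(y - x)^2/(2*(1 - s))) := by ring
    have step := outer_le _ _ key2 h0
    calc (∫ s in Set.Ioc (0:ℝ) 1, ∫ y in Set.Iic (v*s),
          Real.exp (-(y - x)^2/(2*(1 - s))) / (4*π*(1 - s)) *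
            min (C * Real.exp (v*s - y + L)) (α/2))
        ≤ 2 * ((α/2) * (Real.sqrt (2*π)/(4*π))) := step
      _ = α * Real.sqrt (2*π) / (4*π) := by ring
      _ ≤ α * (2*π) / (4*π) :=
          (div_le_div_iff_of_pos_right (show (0:ℝ) < 4*π by positivity)).mpr
            (mul_le_mul_of_nonneg_left hsq hα0.le)
      _ = α / 2 := by field_simp; ring
      _ ≤ α := by linarith
end
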